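/- Let H ∈ ℝ^{n×n} be symmetric with smallest eigenvalue α₀ satisfying 0 < α₀ ≤ ν²/4, ν > 0. With ω := α₀ if α₀ < ν²/4 (respectively ω := α₀ − ε²/4 with 0 < ε < ν if α₀ = ν²/4), the matrix P = [[2I, νI], [νI, 2H + (ν² − 4ω)I]] is symmetric positive definite and satisfies QP + PQ^T ≥ (ν − √(ν² − 4ω)) P, where Q = [[0, I], [-H, νI]]. -/

import Mathlib

open Matrix

variable {n : ℕ}

lemma myPosSemidef_smul {m : Type*} [Fintype m] {M : Matrix m m ℝ} (hM : M.PosSemidef)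
    {c : ℝ} (hc : 0 ≤ c) : (c • M).PosSemidef := by
  refine posSemidef_iff_dotProduct_mulVec.mpr ⟨?_, fun x => ?_⟩
  · rw [IsHermitian, conjTranspose_smul, star_trivial, hM.1.eq]
  · rw [smul_mulVec, dotProduct_smul]
    exact smul_nonneg hc ((posSemidef_iff_dotProduct_mulVec.mp hM).2 x)

lemma myPosDef_smul_one {m : Type*} [Fintype m] [DecidableEq m] {c : ℝ} (hc : 0 < c) :
    (c • (1 : Matrix m m ℝ)).PosDef := by
  rw [smul_one_eq_diagonal]
  exact posDef_diagonal_iff.mpr fun _ => hc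

lemma mySub_smul_one_posSemidef {m : Type*} [Fintype m] [DecidableEq m]
    {H : Matrix m m ℝ} (hH : H.IsHermitian) {c : ℝ} (h : ∀ i, c ≤ hH.eigenvalues i) :
    (H - c • 1).PosSemidef := by
  have hU : (hH.eigenvectorUnitary : Matrix m m ℝ) * star (hH.eigenvectorUnitary : Matrix m m ℝ) = 1 :=
    (Matrix.mem_unitaryGroup_iff).mp hH.eigenvectorUnitary.2
  have key : H - c • 1 =
      (hH.eigenvectorUnitary : Matrix m m ℝ) * diagonal (fun i => hH.eigenvalues i - c) *
        ((hH.eigenvectorUnitary : Matrix m m ℝ))ᴴ := by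
    conv_lhs => rw [hH.spectral_theorem]
    rw [← hU]
    rw [← Matrix.star_eq_conjTranspose]
    have : (diagonal (fun i => hH.eigenvalues i - c) : Matrix m m ℝ)
        = diagonal (RCLike.ofReal ∘ hH.eigenvalues) - c • 1 := by
      rw [smul_one_eq_diagonal, ← diagonal_sub]
      congr 1
    rw [this, Matrix.mul_sub, Matrix.sub_mul, Matrix.mul_smul, Matrix.smul_mul, Matrix.mul_one]
    rfl
  rw [key]
  exact (posSemidef_diagonal_iff.mpr fun i => by simpa using h i).mul_mul_conjTranspose_same _

lemma myPosDef_fromBlocks {m l : Type*} [Fintype m] [DecidableEq m] [Fintype l]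
    {A : Matrix m m ℝ} (B : Matrix m l ℝ) (D : Matrix l l ℝ) (hA : A.PosDef) [Invertible A]
    (hD : (D - Bᴴ * A⁻¹ * B).PosDef) : (fromBlocks A B Bᴴ D).PosDef := by
  refine posDef_iff_dotProduct_mulVec.mpr ⟨(IsHermitian.fromBlocks₁₁ B D hA.1).mpr hD.1, fun x hx => ?_⟩
  rw [dotProduct_mulVec, ← Sum.elim_comp_inl_inr x, schur_complement_eq₁₁ B D _ _ hA.1]
  by_cases hy : x ∘ Sum.inr = 0
  · have hx1 : x ∘ Sum.inl ≠ 0 := by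
      intro h1
      apply hx
      funext i
      cases i with
      | inl i => exact congrFun h1 i
      | inr i => exact congrFun hy i
    rw [hy]
    simp only [mulVec_zero, add_zero, star_zero, zero_vecMul, zero_dotProduct]
    rw [← dotProduct_mulVec]
    exact (posDef_iff_dotProduct_mulVec.mp hA).2 hx1
  · refine add_pos_of_nonneg_of_pos ?_ ?_
    · rw [← dotProduct_mulVec]
      exact (posSemidef_iff_dotProduct_mulVec.mp hA.posSemidef).2 _
    · rw [← dotProduct_mulVec]
      exact (posDef_iff_dotProduct_mulVec.mp hD).2 hy

theorem stmt4 (n : ℕ) (ν α₀ ω : ℝ) (hν : 0 < ν)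
    (H : Matrix (Fin n) (Fin n) ℝ) (hH : H.IsHermitian)
    (hlb : ∀ i, α₀ ≤ hH.eigenvalues i) (hmin : ∃ i, hH.eigenvalues i = α₀)
    (h0 : 0 < α₀) (h1 : α₀ ≤ ν ^ 2 / 4)
    (hω : (α₀ < ν ^ 2 / 4 ∧ ω = α₀) ∨
      (α₀ = ν ^ 2 / 4 ∧ ∃ ε : ℝ, 0 < ε ∧ ε < ν ∧ ω = α₀ - ε ^ 2 / 4)) :
    let P := Matrix.fromBlocks ((2 : ℝ) • (1 : Matrix (Fin n) (Fin n) ℝ)) (ν • 1) (ν • 1)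
      ((2 : ℝ) • H + (ν ^ 2 - 4 * ω) • 1)
    let Q := Matrix.fromBlocks (0 : Matrix (Fin n) (Fin n) ℝ) 1 (-H) (ν • 1)
    P.PosDef ∧ (Q * P + P * Qᵀ - (ν - Real.sqrt (ν ^ 2 - 4 * ω)) • P).PosSemidef := by
  intro P Q
  -- basic facts
  have hνω : 0 < ν ^ 2 - 4 * ω := by
    rcases hω with ⟨hlt, rfl⟩ | ⟨heq, ε, hε0, hεν, rfl⟩
    · linarith
    · nlinarith
  have hωα : ω ≤ α₀ := by
    rcases hω with ⟨hlt, rfl⟩ | ⟨heq, ε, hε0, hεν, rfl⟩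
    · linarith
    · nlinarith
  set s := Real.sqrt (ν ^ 2 - 4 * ω) with hs
  have hs2 : s ^ 2 = ν ^ 2 - 4 * ω := Real.sq_sqrt hνω.le
  have hspos : 0 < s := Real.sqrt_pos.mpr hνω
  have hHt : Hᵀ = H := by
    have := hH.eq
    rwa [conjTranspose_eq_transpose_of_trivial] at this
  have hHω : (H - ω • 1).PosSemidef := mySub_smul_one_posSemidef hH fun i => (hωα.trans (hlb i))
  have hHα : (H - α₀ • 1).PosSemidef := mySub_smul_one_posSemidef hH hlb
  -- rewrite coefficient ν^2 - 4ω as s^2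
  have hPdef : P = fromBlocks ((2 : ℝ) • (1 : Matrix (Fin n) (Fin n) ℝ)) (ν • 1) (ν • 1)
      ((2 : ℝ) • H + (s ^ 2) • 1) := by rw [hs2]
  constructor
  · -- positive definiteness of P
    haveI : Invertible ((2 : ℝ) • (1 : Matrix (Fin n) (Fin n) ℝ)) :=
      ⟨(2⁻¹ : ℝ) • 1, by rw [Matrix.smul_mul, Matrix.mul_smul, Matrix.one_mul, smul_smul]; norm_num,
        by rw [Matrix.smul_mul, Matrix.mul_smul, Matrix.one_mul, smul_smul]; norm_num⟩
    have hAinv : ((2 : ℝ) • (1 : Matrix (Fin n) (Fin n) ℝ))⁻¹ = (2⁻¹ : ℝ) • 1 :=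
      inv_eq_right_inv (by rw [Matrix.smul_mul, Matrix.mul_smul, Matrix.one_mul, smul_smul]; norm_num)
    have hSchur : ((2 : ℝ) • H + (s ^ 2) • 1 -
        (ν • (1 : Matrix (Fin n) (Fin n) ℝ))ᴴ * ((2 : ℝ) • (1 : Matrix (Fin n) (Fin n) ℝ))⁻¹ * (ν • 1)).PosDef := by
      rw [hAinv]
      have hcalc : (2 : ℝ) • H + (s ^ 2) • (1 : Matrix (Fin n) (Fin n) ℝ) -
          (ν • (1 : Matrix (Fin n) (Fin n) ℝ))ᴴ * ((2⁻¹ : ℝ) • 1) * (ν • 1)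
          = (2 : ℝ) • (H - α₀ • 1) + (2 * α₀ + s ^ 2 - ν ^ 2 / 2) • 1 := by
        simp only [conjTranspose_smul, conjTranspose_one, star_trivial,
          Matrix.smul_mul, Matrix.mul_smul, Matrix.one_mul, Matrix.mul_one, smul_smul, smul_sub]
        module
      rw [hcalc]
      have hpos : 0 < 2 * α₀ + s ^ 2 - ν ^ 2 / 2 := by
        rw [hs2]
        rcases hω with ⟨hlt, rfl⟩ | ⟨heq, ε, hε0, hεν, rfl⟩
        · linarith
        · nlinarith
      exact Matrix.PosDef.posSemidef_add (myPosSemidef_smul hHα (by norm_num)) (myPosDef_smul_one hpos)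
    have := myPosDef_fromBlocks (ν • (1 : Matrix (Fin n) (Fin n) ℝ))
      ((2 : ℝ) • H + (s ^ 2) • 1) (myPosDef_smul_one (by norm_num : (0:ℝ) < 2)) hSchur
    rw [show (ν • (1 : Matrix (Fin n) (Fin n) ℝ))ᴴ = ν • 1 by simp] at this
    rw [hPdef]
    exact this
  · -- positive semidefiniteness part
    have key : Q * P + P * Qᵀ - (ν - s) • P =
        fromBlocks ((2 * s) • 1) ((s * (s + ν)) • 1) ((s * (s + ν)) • 1)
          ((2 * s) • H + (s ^ 2 * (s + ν)) • 1) := by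
      rw [hPdef]
      show fromBlocks 0 1 (-H) (ν • 1) * _ + _ * (fromBlocks 0 1 (-H) (ν • 1))ᵀ - _ = _
      rw [fromBlocks_transpose, fromBlocks_multiply, fromBlocks_multiply, fromBlocks_smul,
        sub_eq_add_neg, fromBlocks_add, fromBlocks_neg, fromBlocks_add, fromBlocks_inj]
      refine ⟨?_, ?_, ?_, ?_⟩ <;>
        simp only [transpose_zero, transpose_one, transpose_smul, transpose_neg, hHt,
          Matrix.smul_mul, Matrix.mul_smul, Matrix.one_mul, Matrix.mul_one, Matrix.mul_zero,
          Matrix.zero_mul, Matrix.neg_mul, Matrix.mul_neg, Matrix.mul_add, Matrix.add_mul,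
          smul_smul, smul_add, smul_neg, sub_eq_add_neg] <;> module
    rw [key]
    haveI : Invertible ((2 * s) • (1 : Matrix (Fin n) (Fin n) ℝ)) :=
      ⟨(2 * s)⁻¹ • 1,
        by rw [Matrix.smul_mul, Matrix.mul_smul, Matrix.one_mul, smul_smul,
             inv_mul_cancel₀ (by positivity : (2*s) ≠ 0), one_smul],
        by rw [Matrix.smul_mul, Matrix.mul_smul, Matrix.one_mul, smul_smul,
             mul_inv_cancel₀ (by positivity : (2*s) ≠ 0), one_smul]⟩
    have hAinv : ((2 * s) • (1 : Matrix (Fin n) (Fin n) ℝ))⁻¹ = (2 * s)⁻¹ • 1 :=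
      inv_eq_right_inv (by rw [Matrix.smul_mul, Matrix.mul_smul, Matrix.one_mul, smul_smul,
        mul_inv_cancel₀ (by positivity : (2*s) ≠ 0), one_smul])
    have hApos : ((2 * s) • (1 : Matrix (Fin n) (Fin n) ℝ)).PosDef :=
      myPosDef_smul_one (by positivity)
    have hSchur : ((2 * s) • H + (s ^ 2 * (s + ν)) • 1 -
        ((s * (s + ν)) • (1 : Matrix (Fin n) (Fin n) ℝ))ᴴ *
          ((2 * s) • (1 : Matrix (Fin n) (Fin n) ℝ))⁻¹ * ((s * (s + ν)) • 1)).PosSemidef := by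
      rw [hAinv]
      have hcoef : s ^ 2 * (s + ν) - s * (s + ν) * ((2 * s)⁻¹ * (s * (s + ν))) = -(2 * s * ω) := by
        field_simp
        nlinarith [hs2]
      have hcalc : (2 * s) • H + (s ^ 2 * (s + ν)) • (1 : Matrix (Fin n) (Fin n) ℝ) -
          ((s * (s + ν)) • (1 : Matrix (Fin n) (Fin n) ℝ))ᴴ * ((2 * s)⁻¹ • 1) * ((s * (s + ν)) • 1)
          = (2 * s) • (H - ω • 1) := by
        simp only [conjTranspose_smul, conjTranspose_one, star_trivial,
          Matrix.smul_mul, Matrix.mul_smul, Matrix.one_mul, Matrix.mul_one, smul_smul, smul_sub]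
        rw [sub_eq_add_neg, sub_eq_add_neg, ← neg_smul, ← neg_smul, add_assoc, ← add_smul,
          show s ^ 2 * (s + ν) + -(s * (s + ν) * ((2 * s)⁻¹ * (s * (s + ν)))) = -(2 * s * ω) by
            linarith [hcoef]]
      rw [hcalc]
      exact myPosSemidef_smul hHω (by positivity)
    have := (PosDef.fromBlocks₁₁ ((s * (s + ν)) • (1 : Matrix (Fin n) (Fin n) ℝ))
      ((2 * s) • H + (s ^ 2 * (s + ν)) • 1) hApos).mpr hSchur
    rw [show ((s * (s + ν)) • (1 : Matrix (Fin n) (Fin n) ℝ))ᴴ = (s * (s + ν)) • 1 by simp] at this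
    exact this
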